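/- The set of L-projections on a Banach space X forms a Boolean algebra with operations π ∧ ρ = π∘ρ, π ∨ ρ = π + ρ − π∘ρ, and complement π* = I − π, with 0 as bottom and the identity as top. -/

import Mathlib

def IsLProj {X : Type*} [NormedAddCommGroup X] [NormedSpace ℝ X]
    (π : X →L[ℝ] X) : Prop :=
  π.comp π = π ∧ ∀ x, ‖x‖ = ‖π x‖ + ‖x - π x‖

/-- The type of L-projections on `X`. -/
def LProj (X : Type*) [NormedAddCommGroup X] [NormedSpace ℝ X] : Type _ :=
  {π : X →L[ℝ] X // IsLProj π}

/-- A Boolean algebra structure on the L-projections realizes the operations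
`π ⊓ ρ = π∘ρ`, `π ⊔ ρ = π + ρ - π∘ρ`, `πᶜ = I - π`, `⊥ = 0`, `⊤ = I`. -/
def IsCunninghamBA (X : Type*) [NormedAddCommGroup X] [NormedSpace ℝ X]
    [inst : BooleanAlgebra (LProj X)] : Prop :=
  (∀ p q : LProj X, (p ⊓ q).1 = p.1.comp q.1) ∧
  (∀ p q : LProj X, (p ⊔ q).1 = p.1 + q.1 - p.1.comp q.1) ∧
  (∀ p : LProj X, (pᶜ).1 = ContinuousLinearMap.id ℝ X - p.1) ∧
  (⊥ : LProj X).1 = 0 ∧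
  (⊤ : LProj X).1 = ContinuousLinearMap.id ℝ X

section Aux

variable {X : Type*} [NormedAddCommGroup X] [NormedSpace ℝ X]

lemma isLProj_iff (π : X →L[ℝ] X) : IsLProj π ↔ IsLprojection X π := by
  constructor
  · rintro ⟨h1, h2⟩
    refine ⟨h1, fun x => ?_⟩
    have : (1 - π) • x = x - π x := by
      show (1 - π) x = x - π x
      simp
    rw [this]
    exact h2 x
  · rintro ⟨h1, h2⟩
    refine ⟨h1, fun x => ?_⟩
    have := h2 x
    have h3 : (1 - π) • x = x - π x := by
      show (1 - π) x = x - π x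
      simp
    rw [h3] at this
    exact this

/-- The canonical map from `LProj X` to mathlib's subtype of L-projections. -/
def LProj.toML (p : LProj X) : {P : X →L[ℝ] X // IsLprojection X P} :=
  ⟨p.1, (isLProj_iff p.1).1 p.2⟩

lemma LProj.toML_injective :
    Function.Injective (LProj.toML (X := X)) := by
  intro p q h
  have h' : p.1 = q.1 :=
    congrArg (fun r : {P : X →L[ℝ] X // IsLprojection X P} => r.1) h
  exact Subtype.ext h'

/-- The inverse map. -/
def LProj.ofML (p : {P : X →L[ℝ] X // IsLprojection X P}) : LProj X :=
  ⟨p.1, (isLProj_iff p.1).2 p.2⟩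

instance : Min (LProj X) :=
  ⟨fun p q => LProj.ofML (p.toML ⊓ q.toML)⟩

instance : Max (LProj X) :=
  ⟨fun p q => LProj.ofML (p.toML ⊔ q.toML)⟩

instance : Compl (LProj X) :=
  ⟨fun p => LProj.ofML (p.toML)ᶜ⟩

instance : Top (LProj X) :=
  ⟨LProj.ofML ⊤⟩

instance : Bot (LProj X) :=
  ⟨LProj.ofML ⊥⟩

instance : SDiff (LProj X) :=
  ⟨fun p q => LProj.ofML (p.toML \ q.toML)⟩

instance : HImp (LProj X) :=
  ⟨fun p q => LProj.ofML (p.toML ⇨ q.toML)⟩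

instance : LE (LProj X) :=
  ⟨fun p q => p.toML ≤ q.toML⟩

instance : LT (LProj X) :=
  ⟨fun p q => p.toML < q.toML⟩

lemma LProj.toML_ofML (p : {P : X →L[ℝ] X // IsLprojection X P}) :
    (LProj.ofML p).toML = p := rfl

/-- The Boolean algebra on `LProj X`, pulled back from mathlib's. -/
noncomputable def LProj.booleanAlgebra : BooleanAlgebra (LProj X) :=
  Function.Injective.booleanAlgebra LProj.toML LProj.toML_injective
    Iff.rfl Iff.rfl (fun _ _ => rfl) (fun _ _ => rfl) rfl rfl (fun _ => rfl) (fun _ _ => rfl)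
    (fun _ _ => rfl)

end Aux

/-- The set of L-projections on a Banach space forms a Boolean algebra with
`π ⊓ ρ = π∘ρ`, `π ⊔ ρ = π + ρ - π∘ρ`, complement `I - π`, bottom `0`, top `I`. -/
theorem lproj_booleanAlgebra (X : Type*) [NormedAddCommGroup X]
    [NormedSpace ℝ X] [CompleteSpace X] :
    ∃ inst : BooleanAlgebra (LProj X), IsCunninghamBA X (inst := inst) := by
  refine ⟨LProj.booleanAlgebra, ?_, ?_, ?_, ?_, ?_⟩
  · intro p q
    show (p.1 * q.1 : X →L[ℝ] X) = p.1.comp q.1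
    rfl
  · intro p q
    show (p.1 + q.1 - p.1 * q.1 : X →L[ℝ] X) = p.1 + q.1 - p.1.comp q.1
    rfl
  · intro p
    show ((1 : X →L[ℝ] X) - p.1) = ContinuousLinearMap.id ℝ X - p.1
    rfl
  · rfl
  · rfl
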